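/- Let H = (p1^2 + p2^2)/(u1^2 + u2^2) + (V(u1) + V(u2))/(u1^2 + u2^2) with V(u) = a u^2 + b u + c, on the open set u1^2 + u2^2 ≠ 0. Then the Stäckel integral I2 = (u2^2(p1^2 + V(u1)) - u1^2(p2^2 + V(u2)))/(u1^2 + u2^2) Poisson commutes with H: {H, I2} = 0. -/

import Mathlib

/-- Canonical Poisson bracket on R^4:
{F,G} = sum_i (dF/dq_i dG/dp_i - dF/dp_i dG/dq_i). -/
noncomputable def pb (F G : ℝ → ℝ → ℝ → ℝ → ℝ) (q1 q2 p1 p2 : ℝ) : ℝ :=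
  deriv (fun x => F x q2 p1 p2) q1 * deriv (fun x => G q1 q2 x p2) p1
  - deriv (fun x => F q1 q2 x p2) p1 * deriv (fun x => G x q2 p1 p2) q1
  + deriv (fun x => F q1 x p1 p2) q2 * deriv (fun x => G q1 q2 p1 x) p2
  - deriv (fun x => F q1 q2 p1 x) p2 * deriv (fun x => G q1 x p1 p2) q2

/-- Parabolic separation: with V(u) = a u^2 + b u + c, the Stackel integral
I2 = (u2^2(p1^2+V(u1)) - u1^2(p2^2+V(u2)))/(u1^2+u2^2) Poisson commutes with
H = (p1^2+p2^2)/(u1^2+u2^2) + (V(u1)+V(u2))/(u1^2+u2^2) where u1^2+u2^2 ≠ 0. -/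
theorem parabolic_stackel_commutes (a b c : ℝ) (u1 u2 p1 p2 : ℝ)
    (h : u1 ^ 2 + u2 ^ 2 ≠ 0) :
    pb (fun u1 u2 p1 p2 =>
          (p1 ^ 2 + p2 ^ 2) / (u1 ^ 2 + u2 ^ 2)
          + ((a * u1 ^ 2 + b * u1 + c) + (a * u2 ^ 2 + b * u2 + c)) / (u1 ^ 2 + u2 ^ 2))
       (fun u1 u2 p1 p2 =>
          (u2 ^ 2 * (p1 ^ 2 + (a * u1 ^ 2 + b * u1 + c))
           - u1 ^ 2 * (p2 ^ 2 + (a * u2 ^ 2 + b * u2 + c))) / (u1 ^ 2 + u2 ^ 2))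
       u1 u2 p1 p2 = 0 := by
  have hD1 : HasDerivAt (fun x : ℝ => x ^ 2 + u2 ^ 2) (2 * u1) u1 := by
    simpa using (hasDerivAt_pow 2 u1).add_const (u2 ^ 2)
  have hD2 : HasDerivAt (fun x : ℝ => u1 ^ 2 + x ^ 2) (2 * u2) u2 := by
    simpa using (hasDerivAt_pow 2 u2).const_add (u1 ^ 2)
  have hV1 : HasDerivAt (fun x : ℝ => a * x ^ 2 + b * x + c) (2 * a * u1 + b) u1 := by
    have := (((hasDerivAt_pow 2 u1).const_mul a).add
      ((hasDerivAt_id u1).const_mul b)).add_const c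
    refine this.congr_deriv ?_
    ring
  have hV2 : HasDerivAt (fun x : ℝ => a * x ^ 2 + b * x + c) (2 * a * u2 + b) u2 := by
    have := (((hasDerivAt_pow 2 u2).const_mul a).add
      ((hasDerivAt_id u2).const_mul b)).add_const c
    refine this.congr_deriv ?_
    ring
  set D : ℝ := u1 ^ 2 + u2 ^ 2 with hDdef
  -- dH/du1
  have hHu1 : HasDerivAt (fun x : ℝ =>
      (p1 ^ 2 + p2 ^ 2) / (x ^ 2 + u2 ^ 2)
      + ((a * x ^ 2 + b * x + c) + (a * u2 ^ 2 + b * u2 + c)) / (x ^ 2 + u2 ^ 2))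
      ((0 * D - (p1 ^ 2 + p2 ^ 2) * (2 * u1)) / D ^ 2
       + ((2 * a * u1 + b) * D
          - ((a * u1 ^ 2 + b * u1 + c) + (a * u2 ^ 2 + b * u2 + c)) * (2 * u1)) / D ^ 2)
      u1 :=
    ((hasDerivAt_const u1 (p1 ^ 2 + p2 ^ 2)).div hD1 h).add
      ((hV1.add_const (a * u2 ^ 2 + b * u2 + c)).div hD1 h)
  -- dH/du2
  have hHu2 : HasDerivAt (fun x : ℝ =>
      (p1 ^ 2 + p2 ^ 2) / (u1 ^ 2 + x ^ 2)
      + ((a * u1 ^ 2 + b * u1 + c) + (a * x ^ 2 + b * x + c)) / (u1 ^ 2 + x ^ 2))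
      ((0 * D - (p1 ^ 2 + p2 ^ 2) * (2 * u2)) / D ^ 2
       + ((2 * a * u2 + b) * D
          - ((a * u1 ^ 2 + b * u1 + c) + (a * u2 ^ 2 + b * u2 + c)) * (2 * u2)) / D ^ 2)
      u2 :=
    ((hasDerivAt_const u2 (p1 ^ 2 + p2 ^ 2)).div hD2 h).add
      ((hV2.const_add (a * u1 ^ 2 + b * u1 + c)).div hD2 h)
  -- dH/dp1
  have hHp1 : HasDerivAt (fun x : ℝ =>
      (x ^ 2 + p2 ^ 2) / D
      + ((a * u1 ^ 2 + b * u1 + c) + (a * u2 ^ 2 + b * u2 + c)) / D)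
      (2 * p1 / D) p1 := by
    have := ((((hasDerivAt_pow 2 p1).add_const (p2 ^ 2)).div_const D).add_const
      (((a * u1 ^ 2 + b * u1 + c) + (a * u2 ^ 2 + b * u2 + c)) / D))
    refine this.congr_deriv ?_
    ring
  -- dH/dp2
  have hHp2 : HasDerivAt (fun x : ℝ =>
      (p1 ^ 2 + x ^ 2) / D
      + ((a * u1 ^ 2 + b * u1 + c) + (a * u2 ^ 2 + b * u2 + c)) / D)
      (2 * p2 / D) p2 := by
    have := ((((hasDerivAt_pow 2 p2).const_add (p1 ^ 2)).div_const D).add_const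
      (((a * u1 ^ 2 + b * u1 + c) + (a * u2 ^ 2 + b * u2 + c)) / D))
    refine this.congr_deriv ?_
    ring
  -- dI/du1
  have hIu1 : HasDerivAt (fun x : ℝ =>
      (u2 ^ 2 * (p1 ^ 2 + (a * x ^ 2 + b * x + c))
       - x ^ 2 * (p2 ^ 2 + (a * u2 ^ 2 + b * u2 + c))) / (x ^ 2 + u2 ^ 2))
      (((u2 ^ 2 * (2 * a * u1 + b)
         - 2 * u1 * (p2 ^ 2 + (a * u2 ^ 2 + b * u2 + c))) * D
        - (u2 ^ 2 * (p1 ^ 2 + (a * u1 ^ 2 + b * u1 + c))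
           - u1 ^ 2 * (p2 ^ 2 + (a * u2 ^ 2 + b * u2 + c))) * (2 * u1)) / D ^ 2)
      u1 := by
    have hnum : HasDerivAt (fun x : ℝ =>
        u2 ^ 2 * (p1 ^ 2 + (a * x ^ 2 + b * x + c))
        - x ^ 2 * (p2 ^ 2 + (a * u2 ^ 2 + b * u2 + c)))
        (u2 ^ 2 * (2 * a * u1 + b)
         - 2 * u1 * (p2 ^ 2 + (a * u2 ^ 2 + b * u2 + c))) u1 := by
      have := ((hV1.const_add (p1 ^ 2)).const_mul (u2 ^ 2)).sub
        ((hasDerivAt_pow 2 u1).mul_const (p2 ^ 2 + (a * u2 ^ 2 + b * u2 + c)))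
      refine this.congr_deriv ?_
      ring
    exact hnum.div hD1 h
  -- dI/du2
  have hIu2 : HasDerivAt (fun x : ℝ =>
      (x ^ 2 * (p1 ^ 2 + (a * u1 ^ 2 + b * u1 + c))
       - u1 ^ 2 * (p2 ^ 2 + (a * x ^ 2 + b * x + c))) / (u1 ^ 2 + x ^ 2))
      (((2 * u2 * (p1 ^ 2 + (a * u1 ^ 2 + b * u1 + c))
         - u1 ^ 2 * (2 * a * u2 + b)) * D
        - (u2 ^ 2 * (p1 ^ 2 + (a * u1 ^ 2 + b * u1 + c))
           - u1 ^ 2 * (p2 ^ 2 + (a * u2 ^ 2 + b * u2 + c))) * (2 * u2)) / D ^ 2)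
      u2 := by
    have hnum : HasDerivAt (fun x : ℝ =>
        x ^ 2 * (p1 ^ 2 + (a * u1 ^ 2 + b * u1 + c))
        - u1 ^ 2 * (p2 ^ 2 + (a * x ^ 2 + b * x + c)))
        (2 * u2 * (p1 ^ 2 + (a * u1 ^ 2 + b * u1 + c))
         - u1 ^ 2 * (2 * a * u2 + b)) u2 := by
      have := ((hasDerivAt_pow 2 u2).mul_const
          (p1 ^ 2 + (a * u1 ^ 2 + b * u1 + c))).sub
        ((hV2.const_add (p2 ^ 2)).const_mul (u1 ^ 2))
      refine this.congr_deriv ?_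
      ring
    exact hnum.div hD2 h
  -- dI/dp1
  have hIp1 : HasDerivAt (fun x : ℝ =>
      (u2 ^ 2 * (x ^ 2 + (a * u1 ^ 2 + b * u1 + c))
       - u1 ^ 2 * (p2 ^ 2 + (a * u2 ^ 2 + b * u2 + c))) / D)
      (u2 ^ 2 * (2 * p1) / D) p1 := by
    have := ((((hasDerivAt_pow 2 p1).add_const (a * u1 ^ 2 + b * u1 + c)).const_mul
      (u2 ^ 2)).sub_const
      (u1 ^ 2 * (p2 ^ 2 + (a * u2 ^ 2 + b * u2 + c)))).div_const D
    refine this.congr_deriv ?_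
    norm_num
  -- dI/dp2
  have hIp2 : HasDerivAt (fun x : ℝ =>
      (u2 ^ 2 * (p1 ^ 2 + (a * u1 ^ 2 + b * u1 + c))
       - u1 ^ 2 * (x ^ 2 + (a * u2 ^ 2 + b * u2 + c))) / D)
      (-(u1 ^ 2 * (2 * p2)) / D) p2 := by
    have := ((((hasDerivAt_pow 2 p2).add_const (a * u2 ^ 2 + b * u2 + c)).const_mul
      (u1 ^ 2)).const_sub
      (u2 ^ 2 * (p1 ^ 2 + (a * u1 ^ 2 + b * u1 + c)))).div_const D
    refine this.congr_deriv ?_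
    norm_num
  simp only [pb]
  rw [hHu1.deriv, hHu2.deriv, hHp1.deriv, hHp2.deriv,
    hIu1.deriv, hIu2.deriv, hIp1.deriv, hIp2.deriv]
  field_simp
  ring
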